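/- Let p, q be positive constants with p·q < 1/4. Then there exists a nonzero measurable function f : ℝ → ℂ and a constant C > 0 such that |f(x)| ≤ C e^{-p x^2} for all x ∈ ℝ, |𝓕f(ξ)| ≤ C e^{-q ξ^2} for all ξ ∈ ℝ, and f is not almost everywhere equal to any constant multiple of e^{-p x^2}. -/

import Mathlib

open MeasureTheory

/-- The Fourier transform on `ℝ` with the normalization
`𝓕f(ξ) = (2π)^{-1/2} ∫ f(x) e^{-ixξ} dx`. -/
noncomputable def fourierTransformLine (f : ℝ → ℂ) (ξ : ℝ) : ℂ :=
  ((2 * Real.pi) ^ (-(1 : ℝ) / 2) : ℝ) *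
    ∫ x : ℝ, Complex.exp (-Complex.I * (x : ℂ) * (ξ : ℂ)) * f x

theorem stmt_7 (p q : ℝ) (hp : 0 < p) (hq : 0 < q) (hpq : p * q < 1 / 4) :
    ∃ (f : ℝ → ℂ) (C : ℝ), Measurable f ∧ f ≠ 0 ∧ 0 < C ∧
      (∀ x : ℝ, ‖f x‖ ≤ C * Real.exp (-p * x ^ 2)) ∧
      (∀ ξ : ℝ, ‖fourierTransformLine f ξ‖ ≤ C * Real.exp (-q * ξ ^ 2)) ∧
      ∀ A : ℂ, ¬ (∀ᵐ x : ℝ, f x = A * Complex.exp (-(p : ℂ) * (x : ℂ) ^ 2)) := by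
  set a : ℝ := (p + 1 / (4 * q)) / 2 with ha_def
  have hq4 : 0 < 4 * q := by linarith
  have hplt : p < 1 / (4 * q) := by
    rw [lt_div_iff₀ hq4]; nlinarith
  have hpa : p < a := by simp only [ha_def]; linarith
  have ha : 0 < a := lt_trans hp hpa
  have halt : a < 1 / (4 * q) := by simp only [ha_def]; linarith
  have hqa : q < 1 / (4 * a) := by
    rw [lt_div_iff₀ (by linarith : (0:ℝ) < 4 * a)]
    have := (lt_div_iff₀ hq4).mp halt
    nlinarith
  set f : ℝ → ℂ := fun x => Complex.exp (-(a : ℂ) * (x : ℂ) ^ 2) with hf_def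
  have hcont : Continuous f := by fun_prop
  set K : ℝ := (2 * Real.pi) ^ (-(1 : ℝ) / 2) * (Real.pi / a) ^ ((1 : ℝ) / 2) with hK_def
  have hKpos : 0 < K := by
    apply mul_pos
    · exact Real.rpow_pos_of_pos (by positivity) _
    · exact Real.rpow_pos_of_pos (by positivity) _
  refine ⟨f, 1 + K, hcont.measurable, ?_, by linarith, ?_, ?_, ?_⟩
  · intro h
    have : f 0 = 0 := by rw [h]; rfl
    simp [hf_def, Complex.exp_ne_zero] at this
  · intro x
    have h1 : ‖f x‖ = Real.exp (-a * x ^ 2) := by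
      simp only [hf_def]
      rw [show -(a:ℂ) * (x:ℂ) ^ 2 = ((-a * x ^ 2 : ℝ) : ℂ) by push_cast; ring]
      rw [Complex.norm_exp, Complex.ofReal_re]
    rw [h1]
    have h2 : Real.exp (-a * x ^ 2) ≤ Real.exp (-p * x ^ 2) := by
      apply Real.exp_le_exp.mpr; nlinarith [sq_nonneg x]
    nlinarith [Real.exp_pos (-p * x ^ 2), h2]
  · intro ξ
    have hint : (∫ x : ℝ, Complex.exp (-Complex.I * (x : ℂ) * (ξ : ℂ)) * f x)
        = (↑Real.pi / (a : ℂ)) ^ (1 / 2 : ℂ) * Complex.exp (-(ξ:ℂ) ^ 2 / (4 * a)) := by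
      have h := fourierIntegral_gaussian (b := (a : ℂ)) (by simpa using ha) (-(ξ:ℂ))
      simp only [neg_sq] at h
      rw [← h]
      congr 1; ext x
      simp only [hf_def]
      congr 2
      ring
    rw [fourierTransformLine, hint]
    rw [norm_mul, norm_mul]
    have h2 : ‖(↑Real.pi / (a : ℂ)) ^ (1 / 2 : ℂ)‖ = (Real.pi / a) ^ ((1:ℝ) / 2) := by
      rw [show (↑Real.pi / (a : ℂ)) = ((Real.pi / a : ℝ) : ℂ) by push_cast; ring]
      rw [Complex.norm_cpow_eq_rpow_re_of_pos (by positivity)]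
      norm_num
    have h3 : ‖Complex.exp (-(ξ:ℂ) ^ 2 / (4 * a))‖ = Real.exp (-ξ ^ 2 / (4 * a)) := by
      rw [show (-(ξ:ℂ) ^ 2 / (4 * a)) = ((-ξ ^ 2 / (4 * a) : ℝ) : ℂ) by push_cast; ring]
      rw [Complex.norm_exp, Complex.ofReal_re]
    have h1' : ‖(((2 * Real.pi) ^ (-(1 : ℝ) / 2) : ℝ) : ℂ)‖ = (2 * Real.pi) ^ (-(1 : ℝ) / 2) := by
      rw [Complex.norm_real]
      exact abs_of_pos (Real.rpow_pos_of_pos (by positivity) _)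
    rw [h1', h2, h3]
    have h4 : Real.exp (-ξ ^ 2 / (4 * a)) ≤ Real.exp (-q * ξ ^ 2) := by
      apply Real.exp_le_exp.mpr
      rw [div_le_iff₀ (by linarith : (0:ℝ) < 4 * a)]
      have hq4a : q * (4 * a) < 1 := (lt_div_iff₀ (by linarith : (0:ℝ) < 4 * a)).mp hqa
      nlinarith [sq_nonneg ξ]
    calc (2 * Real.pi) ^ (-(1 : ℝ) / 2) * ((Real.pi / a) ^ ((1:ℝ) / 2) * Real.exp (-ξ ^ 2 / (4 * a)))
        = K * Real.exp (-ξ ^ 2 / (4 * a)) := by rw [hK_def]; ring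
      _ ≤ K * Real.exp (-q * ξ ^ 2) := by exact mul_le_mul_of_nonneg_left h4 (le_of_lt hKpos)
      _ ≤ (1 + K) * Real.exp (-q * ξ ^ 2) := by nlinarith [Real.exp_pos (-q * ξ ^ 2)]
  · intro A hA
    have heq : ∀ x : ℝ, f x = A * Complex.exp (-(p : ℂ) * (x : ℂ) ^ 2) := by
      have hcont2 : Continuous (fun x : ℝ => A * Complex.exp (-(p : ℂ) * (x : ℂ) ^ 2)) := by
        fun_prop
      exact fun x => (Continuous.ae_eq_iff_eq volume hcont hcont2).mp hA ▸ rfl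
    have h0 := heq 0
    simp [hf_def] at h0
    have h1 := heq 1
    rw [← h0] at h1
    simp only [hf_def, Complex.ofReal_one, one_pow, mul_one, one_mul] at h1
    have : Real.exp (-a) = Real.exp (-p) := by
      have := h1
      rw [show (-(a:ℂ)) = ((-a : ℝ) : ℂ) by push_cast; ring,
          show (-(p:ℂ)) = ((-p : ℝ) : ℂ) by push_cast; ring,
          ← Complex.ofReal_exp, ← Complex.ofReal_exp] at this
      exact_mod_cast this
    have := Real.exp_injective this
    linarith
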